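/- Tautology criterion for symmetric invariant DNFs built from two levels: Let n ≥ 2 and 1 ≤ k < k' ≤ n, and let D consist of all all-positive cubes of length k and all all-negative cubes of length k'. Then D is a distinct DNF, and D is a tautology if and only if k + k' ≤ n + 1. -/

import Mathlib

abbrev Cube (n : ℕ) := Finset (Fin n) × (Fin n → Bool)

def Sat {n : ℕ} (a : Fin n → Bool) (c : Cube n) : Prop :=
  ∀ i ∈ c.1, a i = c.2 i

def DistinctDNF {n : ℕ} (D : Finset (Cube n)) : Prop :=
  ∀ c ∈ D, ∀ c' ∈ D, c.1 = c'.1 → c = c'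

def Tauto {n : ℕ} (D : Finset (Cube n)) : Prop :=
  ∀ a : Fin n → Bool, ∃ c ∈ D, Sat a c

theorem stmt18 (n k k' : ℕ) (hn : 2 ≤ n) (hk : 1 ≤ k) (hkk : k < k') (hk' : k' ≤ n) :
    DistinctDNF
      ((Finset.univ.powersetCard k).image (fun S : Finset (Fin n) => (S, fun _ => true)) ∪
       (Finset.univ.powersetCard k').image (fun S : Finset (Fin n) => (S, fun _ => false))) ∧
    (Tauto
      ((Finset.univ.powersetCard k).image (fun S : Finset (Fin n) => (S, fun _ => true)) ∪
       (Finset.univ.powersetCard k').image (fun S : Finset (Fin n) => (S, fun _ => false)))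
      ↔ k + k' ≤ n + 1) := by
  constructor
  · -- DistinctDNF
    intro c hc c' hc' hcc
    simp only [Finset.mem_union, Finset.mem_image, Finset.mem_powersetCard] at hc hc'
    rcases hc with ⟨S, ⟨_, hS⟩, rfl⟩ | ⟨S, ⟨_, hS⟩, rfl⟩ <;>
      rcases hc' with ⟨S', ⟨_, hS'⟩, rfl⟩ | ⟨S', ⟨_, hS'⟩, rfl⟩ <;>
      simp only at hcc <;> subst hcc
    · rfl
    · omega
    · omega
    · rfl
  · constructor
    · -- Tauto → k + k' ≤ n + 1
      intro hT
      by_contra hc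
      push_neg at hc
      have hkn : k - 1 < n := by omega
      set a : Fin n → Bool := fun i => decide (i.val < k - 1) with ha
      obtain ⟨c, hcD, hsat⟩ := hT a
      simp only [Finset.mem_union, Finset.mem_image, Finset.mem_powersetCard] at hcD
      have hlow : (Finset.univ.filter (fun i : Fin n => i.val < k - 1)).card = k - 1 := by
        have : Finset.univ.filter (fun i : Fin n => i.val < k - 1) = Finset.Iio ⟨k - 1, hkn⟩ := by
          ext i; simp [Fin.lt_def]
        rw [this, Fin.card_Iio]
      rcases hcD with ⟨S, ⟨_, hS⟩, rfl⟩ | ⟨S, ⟨_, hS⟩, rfl⟩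
      · -- positive cube: S ⊆ true set
        have hsub : S ⊆ Finset.univ.filter (fun i : Fin n => i.val < k - 1) := by
          intro i hi
          have := hsat i hi
          simp only [ha, decide_eq_true_eq] at this
          simp [this]
        have := Finset.card_le_card hsub
        omega
      · -- negative cube
        have hsub : S ⊆ Finset.univ.filter (fun i : Fin n => ¬ i.val < k - 1) := by
          intro i hi
          have := hsat i hi
          simp only [ha, decide_eq_false_iff_not] at this
          exact Finset.mem_filter.2 ⟨Finset.mem_univ _, this⟩
        have h1 := Finset.card_le_card hsub
        have h2 := Finset.card_filter_add_card_filter_not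
          (s := (Finset.univ : Finset (Fin n))) (p := fun i : Fin n => i.val < k - 1)
        rw [Finset.card_univ, Fintype.card_fin] at h2
        omega
    · -- k + k' ≤ n + 1 → Tauto
      intro hle a
      set T : Finset (Fin n) := Finset.univ.filter (fun i => a i = true) with hT
      by_cases h : k ≤ T.card
      · obtain ⟨S, hSsub, hScard⟩ := Finset.exists_subset_card_eq (s := T) (n := k) h
        refine ⟨(S, fun _ => true), ?_, ?_⟩
        · simp only [Finset.mem_union, Finset.mem_image, Finset.mem_powersetCard]
          exact Or.inl ⟨S, ⟨Finset.subset_univ _, hScard⟩, rfl⟩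
        · intro i hi
          have := hSsub hi
          simp only [hT, Finset.mem_filter] at this
          exact this.2
      · have h2 := Finset.card_filter_add_card_filter_not
          (s := (Finset.univ : Finset (Fin n))) (p := fun i : Fin n => a i = true)
        rw [Finset.card_univ, Fintype.card_fin] at h2
        have hTc : T.card = (Finset.univ.filter (fun i : Fin n => a i = true)).card := rfl
        have hge : k' ≤ (Finset.univ.filter (fun i : Fin n => ¬ a i = true)).card := by omega
        obtain ⟨S, hSsub, hScard⟩ := Finset.exists_subset_card_eq (n := k') hge
        refine ⟨(S, fun _ => false), ?_, ?_⟩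
        · simp only [Finset.mem_union, Finset.mem_image, Finset.mem_powersetCard]
          exact Or.inr ⟨S, ⟨Finset.subset_univ _, hScard⟩, rfl⟩
        · intro i hi
          have := hSsub hi
          simp only [Finset.mem_filter] at this
          simpa using this.2
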